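/- Let ν ∈ (0,1), L_ν > 0 and L > 0. Then for all real x, y ≥ 0: L_ν x^ν y − (L/2)(x² + y²) ≤ ν^{ν/(1−ν)} (1 − ν^{1/ν}) L_ν^{2/(1−ν)} / (2 L^{(1+ν)/(1−ν)}). -/

import Mathlib

open Real

/-- maximum of the concave function `f(x,y) = L_ν x^ν y − (L/2)(x² + y²)`
over the nonnegative quadrant. -/
theorem holder_quadratic_max_bound (ν Lν L : ℝ) (hν : ν ∈ Set.Ioo (0 : ℝ) 1)
    (hLν : 0 < Lν) (hL : 0 < L) (x y : ℝ) (hx : 0 ≤ x) (hy : 0 ≤ y) :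
    Lν * x ^ ν * y - L / 2 * (x ^ 2 + y ^ 2) ≤
      ν ^ (ν / (1 - ν)) * (1 - ν ^ (1 / ν)) * Lν ^ (2 / (1 - ν)) /
        (2 * L ^ ((1 + ν) / (1 - ν))) := by
  obtain ⟨hν0, hν1⟩ := hν
  have h1ν : (0:ℝ) < 1 - ν := by linarith
  set z := x ^ ν with hz
  have hz0 : 0 ≤ z := Real.rpow_nonneg hx ν
  -- Step 1: eliminate y
  have step1 : Lν * z * y - L / 2 * (x ^ 2 + y ^ 2) ≤
      Lν ^ 2 / (2 * L) * z ^ 2 - L / 2 * x ^ 2 := by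
    have key : Lν ^ 2 / (2 * L) * z ^ 2 - (Lν * z * y - L / 2 * y ^ 2)
        = (Lν * z - L * y) ^ 2 / (2 * L) := by
      field_simp; ring
    nlinarith [div_nonneg (sq_nonneg (Lν * z - L * y)) (by linarith : (0:ℝ) ≤ 2 * L)]
  refine step1.trans ?_
  -- constants
  set c : ℝ := ν * Lν ^ 2 / L ^ 2 with hc
  have hcpos : 0 < c := by positivity
  set lam : ℝ := c ^ (1 / (1 - ν)) with hlam
  have hlampos : 0 < lam := rpow_pos_of_pos hcpos _
  have hu : (0:ℝ) ≤ x ^ 2 := sq_nonneg x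
  -- z^2 = (x^2)^ν
  have hz2 : z ^ 2 = (x ^ 2) ^ ν := by
    rw [hz, ← Real.rpow_natCast (x ^ ν) 2, ← Real.rpow_natCast x 2,
      ← Real.rpow_mul hx, ← Real.rpow_mul hx]
    norm_num [mul_comm]
  -- AM-GM
  have amgm := Real.geom_mean_le_arith_mean2_weighted hν0.le h1ν.le
      (div_nonneg hu hlampos.le) zero_le_one (by ring)
  have hpow : (x ^ 2) ^ ν ≤ lam ^ ν * (ν * (x ^ 2 / lam) + (1 - ν)) := by
    have h2 : lam ^ ν * (x ^ 2 / lam) ^ ν = (x ^ 2) ^ ν := by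
      rw [← Real.mul_rpow hlampos.le (div_nonneg hu hlampos.le)]
      congr 1
      field_simp
    calc (x ^ 2) ^ ν = lam ^ ν * ((x ^ 2 / lam) ^ ν * (1:ℝ) ^ (1 - ν)) := by
          rw [Real.one_rpow, mul_one, h2]
      _ ≤ lam ^ ν * (ν * (x ^ 2 / lam) + (1 - ν) * 1) :=
          mul_le_mul_of_nonneg_left amgm (Real.rpow_nonneg hlampos.le ν)
      _ = lam ^ ν * (ν * (x ^ 2 / lam) + (1 - ν)) := by ring
  -- lam ^ ν = lam / c
  have hlamnu : lam ^ ν = lam / c := by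
    have h1 : lam ^ (ν - 1) = 1 / c := by
      rw [hlam, ← Real.rpow_mul hcpos.le,
        show 1 / (1 - ν) * (ν - 1) = -1 by field_simp; ring,
        Real.rpow_neg_one, one_div]
    have h2 : lam ^ (ν - 1) * lam = lam ^ ν := by
      rw [← Real.rpow_add_one hlampos.ne']
      congr 1; ring
    rw [← h2, h1]; field_simp
  -- Step 2: bound by the max value  M₀ = Lν^2/(2L) * (1-ν) * lam^ν
  have step2 : Lν ^ 2 / (2 * L) * z ^ 2 - L / 2 * x ^ 2 ≤
      Lν ^ 2 / (2 * L) * (1 - ν) * lam ^ ν := by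
    have h3 : Lν ^ 2 / (2 * L) * ((x ^ 2) ^ ν) ≤
        Lν ^ 2 / (2 * L) * (lam ^ ν * (ν * (x ^ 2 / lam) + (1 - ν))) :=
      mul_le_mul_of_nonneg_left hpow (by positivity)
    have hcancel : Lν ^ 2 / (2 * L) * (lam ^ ν * (ν * (x ^ 2 / lam) + (1 - ν)))
        = L / 2 * x ^ 2 + Lν ^ 2 / (2 * L) * (1 - ν) * lam ^ ν := by
      rw [hlamnu, hc]
      field_simp
    rw [hz2]
    nlinarith [h3, hcancel]
  refine step2.trans ?_
  -- compute lam ^ ν explicitly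
  have hlam_nu_val : lam ^ ν = ν ^ (ν / (1 - ν)) * (Lν ^ 2) ^ (ν / (1 - ν)) / (L ^ 2) ^ (ν / (1 - ν)) := by
    rw [hlam, ← Real.rpow_mul hcpos.le,
      show 1 / (1 - ν) * ν = ν / (1 - ν) by ring, hc,
      Real.div_rpow (by positivity) (by positivity),
      Real.mul_rpow hν0.le (by positivity)]
  -- merge powers of Lν and L
  have hA : Lν ^ 2 * (Lν ^ 2) ^ (ν / (1 - ν)) = Lν ^ (2 / (1 - ν)) := by
    rw [← Real.rpow_natCast Lν 2, ← Real.rpow_mul hLν.le, ← Real.rpow_add hLν]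
    congr 1; push_cast; field_simp; ring
  have hB : L * (L ^ 2) ^ (ν / (1 - ν)) = L ^ ((1 + ν) / (1 - ν)) := by
    rw [← Real.rpow_natCast L 2, ← Real.rpow_mul hL.le]
    nth_rewrite 1 [← Real.rpow_one L]
    rw [← Real.rpow_add hL]
    congr 1; push_cast; field_simp; ring
  have hM : Lν ^ 2 / (2 * L) * (1 - ν) * lam ^ ν
      = ν ^ (ν / (1 - ν)) * (1 - ν) * Lν ^ (2 / (1 - ν)) / (2 * L ^ ((1 + ν) / (1 - ν))) := by
    rw [hlam_nu_val, ← hA, ← hB]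
    have h2e : (0:ℝ) < (L ^ 2) ^ (ν / (1 - ν)) := by positivity
    field_simp
  rw [hM]
  have hmono : 1 - ν ≤ 1 - ν ^ (1 / ν) := by
    have h : ν ^ (1 / ν) ≤ ν := by
      nth_rewrite 3 [← Real.rpow_one ν]
      exact Real.rpow_le_rpow_of_exponent_ge hν0 hν1.le (one_le_one_div hν0 hν1.le)
    linarith
  gcongr
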